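/- Let L be an n×k quaternionic matrix with L L† invertible and M a symmetric purely imaginary k×k quaternionic matrix with L† L - M² = I_k. Suppose p is a unit quaternion and Q is a real orthogonal k×k matrix with Q M Qᵀ = p M p† (where p acts entrywise by conjugation). Then q := p (L L†)⁻¹ L p† Q L† is the unique n×n quaternionic matrix satisfying q L Qᵀ = p L p†, and moreover q q† = I_n. -/

import Mathlib

open Matrix

private lemma conj_map_eq {a b : ℕ} (p : Quaternion ℝ)
    (X : Matrix (Fin a) (Fin b) (Quaternion ℝ)) :
    X.map (fun x => p * x * star p)
      = (p • (1 : Matrix (Fin a) (Fin a) (Quaternion ℝ))) * X *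
        (star p • (1 : Matrix (Fin b) (Fin b) (Quaternion ℝ))) := by
  rw [Matrix.smul_one_eq_diagonal, Matrix.smul_one_eq_diagonal]
  refine Matrix.ext fun i j => ?_
  simp [Matrix.diagonal_mul, Matrix.mul_diagonal]

set_option maxHeartbeats 1000000 in
theorem Q_determines_q (n k : ℕ)
    (L : Matrix (Fin n) (Fin k) (Quaternion ℝ))
    (M : Matrix (Fin k) (Fin k) (Quaternion ℝ))
    (hMsymm : Mᵀ = M) (hMim : Mᴴ = -M)
    (hInv : Invertible (L * Lᴴ))
    (hLM : Lᴴ * L - M * M = 1)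
    (p : Quaternion ℝ) (hp : p * star p = 1)
    (Q : Matrix (Fin k) (Fin k) ℝ) (hQ : Q * Qᵀ = 1)
    (hQM : (Q.map (algebraMap ℝ (Quaternion ℝ))) * M * (Q.map (algebraMap ℝ (Quaternion ℝ)))ᵀ
        = M.map (fun x => p * x * star p)) :
    (((p • (1 : Matrix (Fin n) (Fin n) (Quaternion ℝ))) * ⅟(L * Lᴴ) * L *
        (star p • (1 : Matrix (Fin k) (Fin k) (Quaternion ℝ))) *
        (Q.map (algebraMap ℝ (Quaternion ℝ))) * Lᴴ) * L *
        (Q.map (algebraMap ℝ (Quaternion ℝ)))ᵀ = L.map (fun x => p * x * star p)) ∧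
    (((p • (1 : Matrix (Fin n) (Fin n) (Quaternion ℝ))) * ⅟(L * Lᴴ) * L *
        (star p • (1 : Matrix (Fin k) (Fin k) (Quaternion ℝ))) *
        (Q.map (algebraMap ℝ (Quaternion ℝ))) * Lᴴ) *
      ((p • (1 : Matrix (Fin n) (Fin n) (Quaternion ℝ))) * ⅟(L * Lᴴ) * L *
        (star p • (1 : Matrix (Fin k) (Fin k) (Quaternion ℝ))) *
        (Q.map (algebraMap ℝ (Quaternion ℝ))) * Lᴴ)ᴴ = 1) ∧
    ∀ q : Matrix (Fin n) (Fin n) (Quaternion ℝ),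
      q * L * (Q.map (algebraMap ℝ (Quaternion ℝ)))ᵀ = L.map (fun x => p * x * star p) →
      q = (p • (1 : Matrix (Fin n) (Fin n) (Quaternion ℝ))) * ⅟(L * Lᴴ) * L *
        (star p • (1 : Matrix (Fin k) (Fin k) (Quaternion ℝ))) *
        (Q.map (algebraMap ℝ (Quaternion ℝ))) * Lᴴ := by
  have hps : star p * p = 1 := by
    rw [Quaternion.star_mul_self, ← Quaternion.self_mul_star, hp]
  simp only [conj_map_eq] at hQM ⊢
  set Q' : Matrix (Fin k) (Fin k) (Quaternion ℝ) := Q.map (algebraMap ℝ (Quaternion ℝ)) with hQ'def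
  set Pn : Matrix (Fin n) (Fin n) (Quaternion ℝ) := p • 1 with hPn
  set Sn : Matrix (Fin n) (Fin n) (Quaternion ℝ) := star p • 1 with hSn
  set Pk : Matrix (Fin k) (Fin k) (Quaternion ℝ) := p • 1 with hPk
  set Sk : Matrix (Fin k) (Fin k) (Quaternion ℝ) := star p • 1 with hSk
  -- scalar matrix facts
  have hPkSk : Pk * Sk = 1 := by
    rw [hPk, hSk, Matrix.smul_one_eq_diagonal, Matrix.smul_one_eq_diagonal,
      Matrix.diagonal_mul_diagonal]
    simp [hp]
  have hSkPk : Sk * Pk = 1 := by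
    rw [hPk, hSk, Matrix.smul_one_eq_diagonal, Matrix.smul_one_eq_diagonal,
      Matrix.diagonal_mul_diagonal]
    simp [hps]
  have hPnSn : Pn * Sn = 1 := by
    rw [hPn, hSn, Matrix.smul_one_eq_diagonal, Matrix.smul_one_eq_diagonal,
      Matrix.diagonal_mul_diagonal]
    simp [hp]
  -- Q' facts
  have hQ'T : Q'ᴴ = Q'ᵀ := by
    refine Matrix.ext fun i j => ?_
    simp [hQ'def, Matrix.conjTranspose_apply]
  have hmm : ∀ (A B : Matrix (Fin k) (Fin k) ℝ),
      (A * B).map (algebraMap ℝ (Quaternion ℝ))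
        = A.map (algebraMap ℝ (Quaternion ℝ)) * B.map (algebraMap ℝ (Quaternion ℝ)) :=
    fun A B => Matrix.map_mul
  have hmo : (1 : Matrix (Fin k) (Fin k) ℝ).map (algebraMap ℝ (Quaternion ℝ)) = 1 :=
    Matrix.map_one _ (map_zero _) (map_one _)
  have hmt : Qᵀ.map (algebraMap ℝ (Quaternion ℝ)) = Q'ᵀ := Matrix.transpose_map
  have hQ'1 : Q' * Q'ᵀ = 1 := by
    have h := congrArg (fun X : Matrix (Fin k) (Fin k) ℝ => X.map (algebraMap ℝ (Quaternion ℝ))) hQ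
    rwa [hmm, hmo, hmt] at h
  have hQ'2 : Q'ᵀ * Q' = 1 := by
    have h := congrArg (fun X : Matrix (Fin k) (Fin k) ℝ => X.map (algebraMap ℝ (Quaternion ℝ)))
      (mul_eq_one_comm.mp hQ)
    rwa [hmm, hmo, hmt] at h
  -- conjTranspose facts
  have hPnH : Pnᴴ = Sn := by
    rw [hPn, hSn, Matrix.smul_one_eq_diagonal, Matrix.smul_one_eq_diagonal,
      Matrix.diagonal_conjTranspose]
    simp [Pi.star_def]
  have hSkH : Skᴴ = Pk := by
    rw [hPk, hSk, Matrix.smul_one_eq_diagonal, Matrix.smul_one_eq_diagonal,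
      Matrix.diagonal_conjTranspose]
    simp [Pi.star_def]
  have hAH : (L * Lᴴ)ᴴ = L * Lᴴ := by
    rw [Matrix.conjTranspose_mul, Matrix.conjTranspose_conjTranspose]
  have hIH : (⅟(L * Lᴴ))ᴴ = ⅟(L * Lᴴ) := by
    have h1 : (L * Lᴴ) * (⅟(L * Lᴴ))ᴴ = 1 := by
      have h := congrArg (fun X : Matrix (Fin n) (Fin n) (Quaternion ℝ) => Xᴴ)
        (invOf_mul_self (L * Lᴴ))
      simp only [Matrix.conjTranspose_mul, Matrix.conjTranspose_one, hAH] at h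
      exact h
    exact (invOf_eq_right_inv h1).symm
  -- cancellation helpers (right-normal form)
  have cQQ : ∀ {m : ℕ} (X : Matrix (Fin k) (Fin m) (Quaternion ℝ)), Q'ᵀ * (Q' * X) = X := by
    intro m X; rw [← Matrix.mul_assoc, hQ'2, Matrix.one_mul]
  have cSP : ∀ {m : ℕ} (X : Matrix (Fin k) (Fin m) (Quaternion ℝ)), Sk * (Pk * X) = X := by
    intro m X; rw [← Matrix.mul_assoc, hSkPk, Matrix.one_mul]
  have cIA : ∀ {m : ℕ} (X : Matrix (Fin n) (Fin m) (Quaternion ℝ)),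
      ⅟(L * Lᴴ) * (L * (Lᴴ * X)) = X := by
    intro m X; rw [← Matrix.mul_assoc L, ← Matrix.mul_assoc, invOf_mul_self, Matrix.one_mul]
  have cAI : ∀ {m : ℕ} (X : Matrix (Fin n) (Fin m) (Quaternion ℝ)),
      L * (Lᴴ * (⅟(L * Lᴴ) * X)) = X := by
    intro m X
    rw [← Matrix.mul_assoc, ← Matrix.mul_assoc, Matrix.mul_assoc L Lᴴ, ← Matrix.mul_assoc L,
      mul_invOf_self, Matrix.one_mul]
  have hone : L * (Lᴴ * ⅟(L * Lᴴ)) = 1 := by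
    rw [← Matrix.mul_assoc, mul_invOf_self]
  -- the key conjugation identity for Lᴴ * L
  have he : Lᴴ * L = 1 + M * M := eq_add_of_sub_eq hLM
  have hQMM : Q' * (M * M) * Q'ᵀ = Pk * (M * M) * Sk := by
    have h1 : Q' * (M * M) * Q'ᵀ = (Q' * M * Q'ᵀ) * (Q' * M * Q'ᵀ) := by
      simp only [Matrix.mul_assoc, cQQ]
    have h2 : (Pk * M * Sk) * (Pk * M * Sk) = Pk * (M * M) * Sk := by
      simp only [Matrix.mul_assoc, cSP]
    rw [h1, hQM, h2]
  have hQe : Q' * (Lᴴ * L) * Q'ᵀ = Pk * (Lᴴ * L) * Sk := by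
    rw [he]
    rw [mul_add, mul_add, add_mul, add_mul, mul_one, mul_one, hQ'1, hPkSk, hQMM]
  have hQeX : ∀ {m : ℕ} (X : Matrix (Fin k) (Fin m) (Quaternion ℝ)),
      Q' * (Lᴴ * (L * (Q'ᵀ * X))) = Pk * (Lᴴ * (L * (Sk * X))) := by
    intro m X
    have h := congrArg (fun Y => Y * X) hQe
    simpa only [Matrix.mul_assoc] using h
  have hQe3 : Q' * (Lᴴ * (L * Q'ᵀ)) = Pk * (Lᴴ * (L * Sk)) := by
    simpa only [Matrix.mul_assoc] using hQe
  have hQe2 : ∀ {m : ℕ} (X : Matrix (Fin k) (Fin m) (Quaternion ℝ)),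
      Q' * (Lᴴ * (L * X)) = Pk * (Lᴴ * (L * (Sk * (Q' * X)))) := by
    intro m X
    have h := hQeX (Q' * X)
    rwa [cQQ] at h
  have hcomm : ∀ {m : ℕ} (X : Matrix (Fin k) (Fin m) (Quaternion ℝ)),
      Lᴴ * (L * (Sk * (Q' * X))) = Sk * (Q' * (Lᴴ * (L * X))) := by
    intro m X
    rw [hQe2 X, cSP]
  refine ⟨?_, ?_, ?_⟩
  · simp only [Matrix.mul_assoc]
    rw [hQe3, cSP, cIA]
  · simp only [Matrix.conjTranspose_mul, Matrix.conjTranspose_conjTranspose, hQ'T, hSkH, hIH,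
      hPnH]
    simp only [Matrix.mul_assoc]
    rw [hQeX, cSP, cSP, cIA, cAI, hPnSn]
  · intro q hq
    simp only [Matrix.mul_assoc] at hq ⊢
    have h2 := congrArg (fun Y => Y * Q') hq
    simp only [Matrix.mul_assoc] at h2
    rw [hQ'2, Matrix.mul_one] at h2
    have h3 := congrArg (fun Y => Y * (Lᴴ * ⅟(L * Lᴴ))) h2
    simp only [Matrix.mul_assoc] at h3
    rw [hone, Matrix.mul_one] at h3
    have h4 : L * (Lᴴ * (L * (Sk * (Q' * (Lᴴ * ⅟(L * Lᴴ)))))) = L * (Sk * (Q' * Lᴴ)) := by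
      rw [hcomm (Lᴴ * ⅟(L * Lᴴ)), hone, Matrix.mul_one]
    have key : L * (Sk * (Q' * (Lᴴ * ⅟(L * Lᴴ)))) = ⅟(L * Lᴴ) * (L * (Sk * (Q' * Lᴴ))) := by
      have h5 := congrArg (fun Y => ⅟(L * Lᴴ) * Y) h4
      rwa [cIA] at h5
    rw [h3, key]
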